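/- Let 𝔻 be the set of all matrices in 𝕋^{α,μ} of the form ⊕_{r=1}^{N} (⊕_{j=1}^{α_r} D_r) with D_r ∈ GL_{m_r}(ℂ) (block diagonal, with the α_r diagonal sub-blocks of the r-th diagonal block all equal to D_r and all other sub-blocks zero), and let 𝕌 be the set of all 𝒳 ∈ 𝕋^{α,μ} satisfying (𝒳_{rr})_{ii} = I_{m_r} for all 1 ≤ r ≤ N and 1 ≤ i ≤ α_r (i.e., the diagonal blocks of 𝒳 are upper unitriangular Toeplitz). Then 𝔻 and 𝕌 are subgroups of 𝕋^{α,μ}, 𝕌 is a normal subgroup of 𝕋^{α,μ}, 𝔻 ∩ 𝕌 = {I}, and every 𝒳 ∈ 𝕋^{α,μ} factors uniquely as 𝒳 = 𝒟𝒰 with 𝒟 ∈ 𝔻 and 𝒰 ∈ 𝕌; that is, 𝕋^{α,μ} = 𝔻 ⋉ 𝕌 is a semidirect product of subgroups. -/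

import Mathlib

open Matrix

noncomputable section

/-- The block-Toeplitz pattern. -/
def BlockToeplitz (N : ℕ) (α μ : Fin N → ℕ)
    (X : Matrix ((r : Fin N) × (Fin (α r) × Fin (μ r)))
      ((r : Fin N) × (Fin (α r) × Fin (μ r))) ℂ) : Prop :=
  (∀ (r s : Fin N) (i i' : Fin (α r)) (j j' : Fin (α s)) (p : Fin (μ r)) (q : Fin (μ s)),
      (i' : ℕ) = (i : ℕ) + 1 → (j' : ℕ) = (j : ℕ) + 1 →
      X ⟨r, i', p⟩ ⟨s, j', q⟩ = X ⟨r, i, p⟩ ⟨s, j, q⟩) ∧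
  (∀ (r s : Fin N) (i : Fin (α r)) (j : Fin (α s)) (p : Fin (μ r)) (q : Fin (μ s)),
      (i : ℕ) ≠ 0 → (j : ℕ) = 0 → X ⟨r, i, p⟩ ⟨s, j, q⟩ = 0) ∧
  (∀ (r s : Fin N) (i : Fin (α r)) (j : Fin (α s)) (p : Fin (μ r)) (q : Fin (μ s)),
      (i : ℕ) + 1 = α r → (j : ℕ) + 1 < α s → X ⟨r, i, p⟩ ⟨s, j, q⟩ = 0)

/-- `⊕_{r=1}^{N} (⊕_{j=1}^{α_r} D_r)`: the block diagonal matrix whose `α_r` diagonal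
sub-blocks in the `r`-th diagonal block all equal `D_r`. -/
def diagRep (N : ℕ) (α μ : Fin N → ℕ) (D : ∀ r, Matrix (Fin (μ r)) (Fin (μ r)) ℂ) :
    Matrix ((r : Fin N) × (Fin (α r) × Fin (μ r)))
      ((r : Fin N) × (Fin (α r) × Fin (μ r))) ℂ :=
  Matrix.of fun x y =>
    if h : x.1 = y.1 ∧ (x.2.1 : ℕ) = (y.2.1 : ℕ) then
      D x.1 x.2.2 (Fin.cast (congrArg μ h.1.symm) y.2.2)
    else 0

namespace Stmt11Aux

variable {N : ℕ} {α m : Fin N → ℕ}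

abbrev Idx (N : ℕ) (α m : Fin N → ℕ) := (r : Fin N) × (Fin (α r) × Fin (m r))
abbrev Mat (N : ℕ) (α m : Fin N → ℕ) := Matrix (Idx N α m) (Idx N α m) ℂ

lemma idx_ext {x y : Idx N α m} (h1 : x.1 = y.1) (h2 : (x.2.1 : ℕ) = y.2.1)
    (h3 : (x.2.2 : ℕ) = y.2.2) : x = y := by
  obtain ⟨r, i, p⟩ := x; obtain ⟨s, j, q⟩ := y
  cases h1
  exact congrArg (Sigma.mk r) (Prod.ext (Fin.ext h2) (Fin.ext h3))

lemma sum_idx (f : Idx N α m → ℂ) :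
    ∑ x : Idx N α m, f x = ∑ r, ∑ i, ∑ p, f ⟨r, (i, p)⟩ := by
  rw [← Finset.univ_sigma_univ, Finset.sum_sigma]
  exact Finset.sum_congr rfl fun r _ => Fintype.sum_prod_type _

def J (N : ℕ) (α m : Fin N → ℕ) : Mat N α m := Matrix.of fun x y =>
  if x.1 = y.1 ∧ (y.2.1 : ℕ) = (x.2.1 : ℕ) + 1 ∧ (y.2.2 : ℕ) = (x.2.2 : ℕ) then 1 else 0

lemma mulJ_eq (X : Mat N α m) {r s : Fin N} {i : Fin (α r)} {j j' : Fin (α s)}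
    {p : Fin (m r)} {q : Fin (m s)} (hj : (j : ℕ) = (j' : ℕ) + 1) :
    (X * J N α m) ⟨r, i, p⟩ ⟨s, j, q⟩ = X ⟨r, i, p⟩ ⟨s, j', q⟩ := by
  rw [Matrix.mul_apply, Fintype.sum_eq_single (⟨s, j', q⟩ : Idx N α m)]
  · have : J N α m ⟨s, j', q⟩ ⟨s, j, q⟩ = 1 := by
      simp [J, hj]
    rw [this, mul_one]
  · rintro ⟨t, k, w⟩ hz
    have : J N α m ⟨t, k, w⟩ ⟨s, j, q⟩ = 0 := by
      simp only [J, Matrix.of_apply, ite_eq_right_iff]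
      rintro ⟨h1, h2, h3⟩
      cases h1
      exact absurd (idx_ext (x := (⟨s, k, w⟩ : Idx N α m)) (y := (⟨s, j', q⟩ : Idx N α m)) rfl (show (k : ℕ) = (j' : ℕ) by omega) h3.symm) hz
    rw [this, mul_zero]

lemma mulJ_zero (X : Mat N α m) {r s : Fin N} {i : Fin (α r)} {j : Fin (α s)}
    {p : Fin (m r)} {q : Fin (m s)} (hj : (j : ℕ) = 0) :
    (X * J N α m) ⟨r, i, p⟩ ⟨s, j, q⟩ = 0 := by
  rw [Matrix.mul_apply]
  apply Finset.sum_eq_zero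
  intro z _
  have : J N α m z ⟨s, j, q⟩ = 0 := by
    simp only [J, Matrix.of_apply, ite_eq_right_iff]
    rintro ⟨h1, h2, h3⟩; omega
  rw [this, mul_zero]

lemma Jmul_eq (X : Mat N α m) {r s : Fin N} {i i' : Fin (α r)} {j : Fin (α s)}
    {p : Fin (m r)} {q : Fin (m s)} (hi : (i' : ℕ) = (i : ℕ) + 1) :
    (J N α m * X) ⟨r, i, p⟩ ⟨s, j, q⟩ = X ⟨r, i', p⟩ ⟨s, j, q⟩ := by
  rw [Matrix.mul_apply, Fintype.sum_eq_single (⟨r, i', p⟩ : Idx N α m)]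
  · have : J N α m ⟨r, i, p⟩ ⟨r, i', p⟩ = 1 := by
      simp [J, hi]
    rw [this, one_mul]
  · rintro ⟨t, k, w⟩ hz
    have : J N α m ⟨r, i, p⟩ ⟨t, k, w⟩ = 0 := by
      simp only [J, Matrix.of_apply, ite_eq_right_iff]
      rintro ⟨h1, h2, h3⟩
      cases h1
      exact absurd (idx_ext (x := (⟨r, k, w⟩ : Idx N α m)) (y := (⟨r, i', p⟩ : Idx N α m)) rfl (show (k : ℕ) = (i' : ℕ) by omega) h3) hz
    rw [this, zero_mul]

lemma Jmul_zero (X : Mat N α m) {r s : Fin N} {i : Fin (α r)} {j : Fin (α s)}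
    {p : Fin (m r)} {q : Fin (m s)} (hi : (i : ℕ) + 1 = α r) :
    (J N α m * X) ⟨r, i, p⟩ ⟨s, j, q⟩ = 0 := by
  rw [Matrix.mul_apply]
  apply Finset.sum_eq_zero
  rintro ⟨t, k, w⟩ _
  have : J N α m ⟨r, i, p⟩ ⟨t, k, w⟩ = 0 := by
    simp only [J, Matrix.of_apply, ite_eq_right_iff]
    rintro ⟨h1, h2, h3⟩
    cases h1
    have := k.isLt
    omega
  rw [this, zero_mul]

lemma BT_iff (X : Mat N α m) : BlockToeplitz N α m X ↔ X * J N α m = J N α m * X := by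
  constructor
  · rintro ⟨h1, h2, h3⟩
    ext ⟨r, i, p⟩ ⟨s, j, q⟩
    by_cases hj : (j : ℕ) = 0
    · rw [mulJ_zero X hj]
      by_cases hi : (i : ℕ) + 1 = α r
      · rw [Jmul_zero X hi]
      · have hi' : (i : ℕ) + 1 < α r := lt_of_le_of_ne i.isLt hi
        rw [Jmul_eq X (i' := ⟨i + 1, hi'⟩) rfl]
        exact (h2 r s ⟨i + 1, hi'⟩ j p q (by simp) hj).symm
    · obtain ⟨j', hj'⟩ : ∃ j' : Fin (α s), (j : ℕ) = (j' : ℕ) + 1 :=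
        ⟨⟨(j : ℕ) - 1, by omega⟩, by simp; omega⟩
      rw [mulJ_eq X hj']
      by_cases hi : (i : ℕ) + 1 = α r
      · rw [Jmul_zero X hi]
        exact h3 r s i j' p q hi (by omega)
      · have hi' : (i : ℕ) + 1 < α r := lt_of_le_of_ne i.isLt hi
        rw [Jmul_eq X (i' := ⟨i + 1, hi'⟩) rfl]
        exact (h1 r s i ⟨i + 1, hi'⟩ j' j p q (by simp) hj').symm
  · intro h
    refine ⟨?_, ?_, ?_⟩
    · intro r s i i' j j' p q hi hj
      have := congrFun (congrFun h ⟨r, i, p⟩) ⟨s, j', q⟩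
      rw [mulJ_eq X hj, Jmul_eq X hi] at this
      exact this.symm
    · intro r s i j p q hi hj
      obtain ⟨i'', hi''⟩ : ∃ i'' : Fin (α r), (i : ℕ) = (i'' : ℕ) + 1 :=
        ⟨⟨(i : ℕ) - 1, by omega⟩, by simp; omega⟩
      have := congrFun (congrFun h ⟨r, i'', p⟩) ⟨s, j, q⟩
      rw [mulJ_zero X hj, Jmul_eq X hi''] at this
      exact this.symm
    · intro r s i j p q hi hj
      obtain ⟨j'', hj''⟩ : ∃ j'' : Fin (α s), (j'' : ℕ) = (j : ℕ) + 1 :=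
        ⟨⟨(j : ℕ) + 1, hj⟩, rfl⟩
      have := congrFun (congrFun h ⟨r, i, p⟩) ⟨s, j'', q⟩
      rwa [mulJ_eq X hj'', Jmul_zero X hi] at this


variable (hα : ∀ r, 0 < α r)

lemma BT_one : BlockToeplitz N α m (1 : Mat N α m) := by
  rw [BT_iff]; rw [one_mul, mul_one]

lemma BT_mul {X Y : Mat N α m} (hX : BlockToeplitz N α m X) (hY : BlockToeplitz N α m Y) :
    BlockToeplitz N α m (X * Y) := by
  rw [BT_iff] at *
  rw [mul_assoc, hY, ← mul_assoc, hX, mul_assoc]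

lemma BT_inv {X : Mat N α m} (hu : IsUnit X) (hX : BlockToeplitz N α m X) :
    BlockToeplitz N α m X⁻¹ := by
  rw [BT_iff] at *
  have hd : IsUnit X.det := (Matrix.isUnit_iff_isUnit_det X).mp hu
  calc X⁻¹ * J N α m = X⁻¹ * J N α m * (X * X⁻¹) := by rw [Matrix.mul_nonsing_inv X hd, mul_one]
    _ = X⁻¹ * (J N α m * X) * X⁻¹ := by simp only [mul_assoc]
    _ = X⁻¹ * (X * J N α m) * X⁻¹ := by rw [hX]
    _ = J N α m * X⁻¹ := by rw [← mul_assoc, Matrix.nonsing_inv_mul X hd, one_mul]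

/-- the projection onto the diagonal sub-blocks -/
def piD (X : Mat N α m) (r : Fin N) : Matrix (Fin (m r)) (Fin (m r)) ℂ :=
  Matrix.of fun p q => X ⟨r, ⟨0, hα r⟩, p⟩ ⟨r, ⟨0, hα r⟩, q⟩

/-- diagonal sub-blocks of a BT matrix on the main diagonal are constant -/
lemma diag_shift {X : Mat N α m} (hX : BlockToeplitz N α m X) {r s : Fin N}
    (d : ℕ) (hdr : d < α r) (hds : d < α s) (p : Fin (m r)) (q : Fin (m s)) :
    X ⟨r, ⟨d, hdr⟩, p⟩ ⟨s, ⟨d, hds⟩, q⟩ = X ⟨r, ⟨0, hα r⟩, p⟩ ⟨s, ⟨0, hα s⟩, q⟩ := by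
  induction d with
  | zero => rfl
  | succ k ih =>
    have hk : k < α r := Nat.lt_of_succ_lt hdr
    have hk' : k < α s := Nat.lt_of_succ_lt hds
    rw [hX.1 r s ⟨k, hk⟩ ⟨k+1, hdr⟩ ⟨k, hk'⟩ ⟨k+1, hds⟩ p q rfl rfl]
    exact ih hk hk'

lemma diag_const {X : Mat N α m} (hX : BlockToeplitz N α m X) {r : Fin N}
    (i : Fin (α r)) (p q : Fin (m r)) :
    X ⟨r, i, p⟩ ⟨r, i, q⟩ = piD hα X r p q := by
  have : X ⟨r, ⟨(i : ℕ), i.isLt⟩, p⟩ ⟨r, ⟨(i : ℕ), i.isLt⟩, q⟩ = _ :=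
    diag_shift hα hX (i : ℕ) i.isLt i.isLt p q
  simpa [piD] using this

/-- top-left corner entries of off-diagonal blocks going to a strictly larger block vanish -/
lemma corner_zero {X : Mat N α m} (hX : BlockToeplitz N α m X) {r s : Fin N}
    (hrs : α r < α s) (p : Fin (m r)) (q : Fin (m s)) :
    X ⟨r, ⟨0, hα r⟩, p⟩ ⟨s, ⟨0, hα s⟩, q⟩ = 0 := by
  have h1 : α r - 1 < α r := by have := hα r; omega
  have h2 : α r - 1 < α s := by omega
  rw [← diag_shift hα hX (α r - 1) h1 h2 p q]
  exact hX.2.2 r s ⟨α r - 1, h1⟩ ⟨α r - 1, h2⟩ p q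
    (show (α r - 1) + 1 = α r by have := hα r; omega)
    (show (α r - 1) + 1 < α s by omega)

lemma piD_one (r : Fin N) : piD hα (1 : Mat N α m) r = 1 := by
  ext p q
  simp only [piD, Matrix.of_apply, Matrix.one_apply]
  by_cases h : p = q
  · subst h; rw [if_pos rfl, if_pos rfl]
  · rw [if_neg h, if_neg]
    intro he
    have := congrArg (fun z : Idx N α m => (z.2.2 : ℕ)) he
    exact h (Fin.ext this)

lemma piD_mul (hmono : ∀ r s : Fin N, r < s → α s < α r) {X Y : Mat N α m}
    (hX : BlockToeplitz N α m X) (hY : BlockToeplitz N α m Y) (r : Fin N) :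
    piD hα (X * Y) r = piD hα X r * piD hα Y r := by
  ext p q
  simp only [piD, Matrix.of_apply, Matrix.mul_apply]
  rw [sum_idx]
  rw [Fintype.sum_eq_single r]
  · rw [Fintype.sum_eq_single (⟨0, hα r⟩ : Fin (α r))]
    intro k hk
    apply Finset.sum_eq_zero
    intro w _
    have : Y ⟨r, k, w⟩ ⟨r, ⟨0, hα r⟩, q⟩ = 0 :=
      hY.2.1 r r k ⟨0, hα r⟩ w q (fun h => hk (Fin.ext h)) rfl
    rw [this, mul_zero]
  · intro s hs
    apply Finset.sum_eq_zero
    intro k _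
    apply Finset.sum_eq_zero
    intro w _
    by_cases hk : (k : ℕ) = 0
    · have hk0 : k = ⟨0, hα s⟩ := Fin.ext hk
      subst hk0
      rcases lt_or_gt_of_ne hs with h | h
      · -- s < r, so α r < α s : Y block (s,r) corner vanishes? no: X block (r,s)
        have hαlt : α r < α s := hmono s r h
        rw [corner_zero hα hX hαlt, zero_mul]
      · have hαlt : α s < α r := hmono r s h
        rw [corner_zero hα hY hαlt, mul_zero]
    · have : Y ⟨s, k, w⟩ ⟨r, ⟨0, hα r⟩, q⟩ = 0 :=
        hY.2.1 s r k ⟨0, hα r⟩ w q hk rfl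
      rw [this, mul_zero]


lemma diagRep_apply_same (D : ∀ r, Matrix (Fin (m r)) (Fin (m r)) ℂ) (r : Fin N)
    (i j : Fin (α r)) (hij : (i : ℕ) = (j : ℕ)) (p q : Fin (m r)) :
    diagRep N α m D ⟨r, i, p⟩ ⟨r, j, q⟩ = D r p q := by
  simp only [diagRep, Matrix.of_apply]
  rw [dif_pos (show True ∧ (i : ℕ) = (j : ℕ) from ⟨trivial, hij⟩)]
  exact congrArg (D r p) (Fin.ext rfl)

lemma diagRep_apply_ne (D : ∀ r, Matrix (Fin (m r)) (Fin (m r)) ℂ) {x y : Idx N α m}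
    (h : ¬(x.1 = y.1 ∧ (x.2.1 : ℕ) = (y.2.1 : ℕ))) :
    diagRep N α m D x y = 0 := by
  simp only [diagRep, Matrix.of_apply]
  rw [dif_neg h]

lemma diagRep_mul (D E : ∀ r, Matrix (Fin (m r)) (Fin (m r)) ℂ) :
    diagRep N α m D * diagRep N α m E = diagRep N α m (fun r => D r * E r) := by
  ext ⟨r, i, p⟩ ⟨s, j, q⟩
  rw [Matrix.mul_apply, sum_idx]
  by_cases h : r = s ∧ (i : ℕ) = (j : ℕ)
  · obtain ⟨rfl, hij⟩ := h
    rw [Fintype.sum_eq_single r]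
    · rw [Fintype.sum_eq_single i]
      · rw [diagRep_apply_same (fun r => D r * E r) r i j hij p q, Matrix.mul_apply]
        refine Finset.sum_congr rfl fun w _ => ?_
        rw [diagRep_apply_same D r i i rfl p w, diagRep_apply_same E r i j hij w q]
      · intro k hk
        apply Finset.sum_eq_zero
        intro w _
        rw [diagRep_apply_ne D (x := (⟨r, i, p⟩ : Idx N α m)) (y := (⟨r, k, w⟩ : Idx N α m))
          (by rintro ⟨-, h2⟩; exact hk (Fin.ext h2.symm)), zero_mul]
    · intro t ht
      apply Finset.sum_eq_zero
      intro k _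
      apply Finset.sum_eq_zero
      intro w _
      rw [diagRep_apply_ne D (x := (⟨r, i, p⟩ : Idx N α m)) (y := (⟨t, k, w⟩ : Idx N α m))
        (by rintro ⟨h1, -⟩; exact ht h1.symm), zero_mul]
  · rw [diagRep_apply_ne _ h]
    apply Finset.sum_eq_zero
    intro t _
    apply Finset.sum_eq_zero
    intro k _
    apply Finset.sum_eq_zero
    intro w _
    by_cases h1 : r = t ∧ (i : ℕ) = (k : ℕ)
    · rw [diagRep_apply_ne E (x := (⟨t, k, w⟩ : Idx N α m)) (y := (⟨s, j, q⟩ : Idx N α m))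
        (by rintro ⟨h2, h3⟩
            replace h3 : (k : ℕ) = (j : ℕ) := h3
            exact h ⟨h1.1.trans h2, by omega⟩), mul_zero]
    · rw [diagRep_apply_ne D (x := (⟨r, i, p⟩ : Idx N α m)) (y := (⟨t, k, w⟩ : Idx N α m)) h1,
        zero_mul]

lemma diagRep_one : diagRep N α m (fun _ => (1 : Matrix _ _ ℂ)) = 1 := by
  ext ⟨r, i, p⟩ ⟨s, j, q⟩
  by_cases h : r = s ∧ (i : ℕ) = (j : ℕ)
  · obtain ⟨rfl, hij⟩ := h
    rw [diagRep_apply_same _ r i j hij p q]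
    by_cases hpq : p = q
    · subst hpq
      have he : (⟨r, (i, p)⟩ : Idx N α m) = ⟨r, (j, p)⟩ := idx_ext rfl hij rfl
      rw [← he, Matrix.one_apply_eq, Matrix.one_apply_eq]
    · rw [Matrix.one_apply_ne hpq, Matrix.one_apply_ne
        (fun he => hpq (Fin.ext (congrArg (fun z : Idx N α m => (z.2.2 : ℕ)) he)))]
  · rw [diagRep_apply_ne _ h, Matrix.one_apply_ne]
    intro he
    exact h ⟨congrArg Sigma.fst he, congrArg (fun z : Idx N α m => (z.2.1 : ℕ)) he⟩

lemma diagRep_BT (D : ∀ r, Matrix (Fin (m r)) (Fin (m r)) ℂ) :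
    BlockToeplitz N α m (diagRep N α m D) := by
  refine ⟨?_, ?_, ?_⟩
  · intro r s i i' j j' p q hi hj
    by_cases h : r = s ∧ (i : ℕ) = (j : ℕ)
    · obtain ⟨rfl, hij⟩ := h
      rw [diagRep_apply_same D r i' j' (by omega) p q, diagRep_apply_same D r i j hij p q]
    · rw [diagRep_apply_ne D (x := (⟨r, i', p⟩ : Idx N α m)) (y := (⟨s, j', q⟩ : Idx N α m))
        (by rintro ⟨h1, h2⟩
            replace h2 : (i' : ℕ) = (j' : ℕ) := h2
            exact h ⟨h1, by omega⟩),
        diagRep_apply_ne D (x := (⟨r, i, p⟩ : Idx N α m)) (y := (⟨s, j, q⟩ : Idx N α m)) h]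
  · intro r s i j p q hi hj
    refine diagRep_apply_ne D (x := (⟨r, i, p⟩ : Idx N α m)) (y := (⟨s, j, q⟩ : Idx N α m)) ?_
    rintro ⟨-, h2⟩
    replace h2 : (i : ℕ) = (j : ℕ) := h2
    omega
  · intro r s i j p q hi hj
    refine diagRep_apply_ne D (x := (⟨r, i, p⟩ : Idx N α m)) (y := (⟨s, j, q⟩ : Idx N α m)) ?_
    rintro ⟨h1, h2⟩
    replace h1 : r = s := h1
    replace h2 : (i : ℕ) = (j : ℕ) := h2
    subst h1
    omega

lemma diagRep_mul_inv (D : ∀ r, Matrix (Fin (m r)) (Fin (m r)) ℂ) (hD : ∀ r, IsUnit (D r)) :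
    diagRep N α m D * diagRep N α m (fun r => (D r)⁻¹) = 1 := by
  rw [diagRep_mul]
  have : (fun r => D r * (D r)⁻¹) = (fun _ : Fin N => (1 : Matrix _ _ ℂ)) :=
    funext fun r => Matrix.mul_nonsing_inv _ ((Matrix.isUnit_iff_isUnit_det _).mp (hD r))
  rw [this, diagRep_one]

lemma diagRep_inv_mul (D : ∀ r, Matrix (Fin (m r)) (Fin (m r)) ℂ) (hD : ∀ r, IsUnit (D r)) :
    diagRep N α m (fun r => (D r)⁻¹) * diagRep N α m D = 1 := by
  rw [diagRep_mul]
  have : (fun r => (D r)⁻¹ * D r) = (fun _ : Fin N => (1 : Matrix _ _ ℂ)) :=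
    funext fun r => Matrix.nonsing_inv_mul _ ((Matrix.isUnit_iff_isUnit_det _).mp (hD r))
  rw [this, diagRep_one]

lemma diagRep_isUnit (D : ∀ r, Matrix (Fin (m r)) (Fin (m r)) ℂ) (hD : ∀ r, IsUnit (D r)) :
    IsUnit (diagRep N α m D) :=
  ⟨⟨diagRep N α m D, diagRep N α m (fun r => (D r)⁻¹),
    diagRep_mul_inv D hD, diagRep_inv_mul D hD⟩, rfl⟩

lemma piD_diagRep (D : ∀ r, Matrix (Fin (m r)) (Fin (m r)) ℂ) (r : Fin N) :
    piD hα (diagRep N α m D) r = D r := by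
  ext p q
  exact diagRep_apply_same D r _ _ rfl p q

lemma mem_U_iff {X : Mat N α m} (hX : BlockToeplitz N α m X) :
    (∀ (r : Fin N) (i : Fin (α r)) (p q : Fin (m r)),
        X ⟨r, i, p⟩ ⟨r, i, q⟩ = if p = q then 1 else 0) ↔ ∀ r, piD hα X r = 1 := by
  constructor
  · intro h r
    ext p q
    rw [show piD hα X r p q = X ⟨r, ⟨0, hα r⟩, p⟩ ⟨r, ⟨0, hα r⟩, q⟩ from rfl, h, Matrix.one_apply]
  · intro h r i p q
    rw [diag_const hα hX i p q, h r, Matrix.one_apply]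

lemma isUnit_inv_mat {n : Type*} [Fintype n] [DecidableEq n] {X : Matrix n n ℂ}
    (h : IsUnit X) : IsUnit X⁻¹ :=
  ⟨⟨X⁻¹, X, Matrix.nonsing_inv_mul X ((Matrix.isUnit_iff_isUnit_det X).mp h),
    Matrix.mul_nonsing_inv X ((Matrix.isUnit_iff_isUnit_det X).mp h)⟩, rfl⟩

lemma mul_inv_one {X : Mat N α m} (h : IsUnit X) : X * X⁻¹ = 1 :=
  Matrix.mul_nonsing_inv X ((Matrix.isUnit_iff_isUnit_det X).mp h)

end Stmt11Aux

open Stmt11Aux in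
/-- `𝕋^{α,μ} = 𝔻 ⋉ 𝕌`: the block diagonal matrices `𝔻` and the
unipotent matrices `𝕌` are subgroups of `𝕋^{α,μ}`, `𝕌` is normal, `𝔻 ∩ 𝕌 = {I}`, and
every `𝒳 ∈ 𝕋^{α,μ}` factors uniquely as `𝒳 = 𝒟𝒰` with `𝒟 ∈ 𝔻`, `𝒰 ∈ 𝕌`. -/
theorem stmt11 (N : ℕ) (hN : 0 < N) (α m : Fin N → ℕ)
    (hmono : ∀ r s : Fin N, r < s → α s < α r)
    (hα : ∀ r, 0 < α r) (hm : ∀ r, 0 < m r) :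
    -- 𝔻 is a subgroup of 𝕋^{α,μ}
    ({X | (IsUnit X ∧ BlockToeplitz N α m X) ∧
        ∃ D : ∀ r, Matrix (Fin (m r)) (Fin (m r)) ℂ, (∀ r, IsUnit (D r)) ∧
          X = diagRep N α m D} ⊆ {X | IsUnit X ∧ BlockToeplitz N α m X}) ∧
    (1 ∈ {X : Matrix ((r : Fin N) × (Fin (α r) × Fin (m r)))
          ((r : Fin N) × (Fin (α r) × Fin (m r))) ℂ |
        (IsUnit X ∧ BlockToeplitz N α m X) ∧
        ∃ D : ∀ r, Matrix (Fin (m r)) (Fin (m r)) ℂ, (∀ r, IsUnit (D r)) ∧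
          X = diagRep N α m D}) ∧
    (∀ X Y, X ∈ {X | (IsUnit X ∧ BlockToeplitz N α m X) ∧
          ∃ D : ∀ r, Matrix (Fin (m r)) (Fin (m r)) ℂ, (∀ r, IsUnit (D r)) ∧
            X = diagRep N α m D} →
        Y ∈ {X | (IsUnit X ∧ BlockToeplitz N α m X) ∧
          ∃ D : ∀ r, Matrix (Fin (m r)) (Fin (m r)) ℂ, (∀ r, IsUnit (D r)) ∧
            X = diagRep N α m D} →
        X * Y ∈ {X | (IsUnit X ∧ BlockToeplitz N α m X) ∧
          ∃ D : ∀ r, Matrix (Fin (m r)) (Fin (m r)) ℂ, (∀ r, IsUnit (D r)) ∧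
            X = diagRep N α m D}) ∧
    (∀ X, X ∈ {X | (IsUnit X ∧ BlockToeplitz N α m X) ∧
          ∃ D : ∀ r, Matrix (Fin (m r)) (Fin (m r)) ℂ, (∀ r, IsUnit (D r)) ∧
            X = diagRep N α m D} →
        X⁻¹ ∈ {X | (IsUnit X ∧ BlockToeplitz N α m X) ∧
          ∃ D : ∀ r, Matrix (Fin (m r)) (Fin (m r)) ℂ, (∀ r, IsUnit (D r)) ∧
            X = diagRep N α m D}) ∧
    -- 𝕌 is a subgroup of 𝕋^{α,μ}
    (1 ∈ {X : Matrix ((r : Fin N) × (Fin (α r) × Fin (m r)))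
          ((r : Fin N) × (Fin (α r) × Fin (m r))) ℂ |
        (IsUnit X ∧ BlockToeplitz N α m X) ∧
        ∀ (r : Fin N) (i : Fin (α r)) (p q : Fin (m r)),
          X ⟨r, i, p⟩ ⟨r, i, q⟩ = if p = q then 1 else 0}) ∧
    (∀ X Y, X ∈ {X | (IsUnit X ∧ BlockToeplitz N α m X) ∧
          ∀ (r : Fin N) (i : Fin (α r)) (p q : Fin (m r)),
            X ⟨r, i, p⟩ ⟨r, i, q⟩ = if p = q then 1 else 0} →
        Y ∈ {X | (IsUnit X ∧ BlockToeplitz N α m X) ∧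
          ∀ (r : Fin N) (i : Fin (α r)) (p q : Fin (m r)),
            X ⟨r, i, p⟩ ⟨r, i, q⟩ = if p = q then 1 else 0} →
        X * Y ∈ {X | (IsUnit X ∧ BlockToeplitz N α m X) ∧
          ∀ (r : Fin N) (i : Fin (α r)) (p q : Fin (m r)),
            X ⟨r, i, p⟩ ⟨r, i, q⟩ = if p = q then 1 else 0}) ∧
    (∀ X, X ∈ {X | (IsUnit X ∧ BlockToeplitz N α m X) ∧
          ∀ (r : Fin N) (i : Fin (α r)) (p q : Fin (m r)),
            X ⟨r, i, p⟩ ⟨r, i, q⟩ = if p = q then 1 else 0} →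
        X⁻¹ ∈ {X | (IsUnit X ∧ BlockToeplitz N α m X) ∧
          ∀ (r : Fin N) (i : Fin (α r)) (p q : Fin (m r)),
            X ⟨r, i, p⟩ ⟨r, i, q⟩ = if p = q then 1 else 0}) ∧
    -- 𝕌 is normal in 𝕋^{α,μ}
    (∀ X U, X ∈ {X | IsUnit X ∧ BlockToeplitz N α m X} →
        U ∈ {X | (IsUnit X ∧ BlockToeplitz N α m X) ∧
          ∀ (r : Fin N) (i : Fin (α r)) (p q : Fin (m r)),
            X ⟨r, i, p⟩ ⟨r, i, q⟩ = if p = q then 1 else 0} →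
        X * U * X⁻¹ ∈ {X | (IsUnit X ∧ BlockToeplitz N α m X) ∧
          ∀ (r : Fin N) (i : Fin (α r)) (p q : Fin (m r)),
            X ⟨r, i, p⟩ ⟨r, i, q⟩ = if p = q then 1 else 0}) ∧
    -- 𝔻 ∩ 𝕌 = {I}
    ({X | (IsUnit X ∧ BlockToeplitz N α m X) ∧
        ∃ D : ∀ r, Matrix (Fin (m r)) (Fin (m r)) ℂ, (∀ r, IsUnit (D r)) ∧
          X = diagRep N α m D} ∩
      {X | (IsUnit X ∧ BlockToeplitz N α m X) ∧
        ∀ (r : Fin N) (i : Fin (α r)) (p q : Fin (m r)),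
          X ⟨r, i, p⟩ ⟨r, i, q⟩ = if p = q then 1 else 0} = {1}) ∧
    -- unique factorization 𝒳 = 𝒟𝒰
    (∀ X, X ∈ {X | IsUnit X ∧ BlockToeplitz N α m X} →
        ∃! P : Matrix ((r : Fin N) × (Fin (α r) × Fin (m r)))
              ((r : Fin N) × (Fin (α r) × Fin (m r))) ℂ ×
            Matrix ((r : Fin N) × (Fin (α r) × Fin (m r)))
              ((r : Fin N) × (Fin (α r) × Fin (m r))) ℂ,
          P.1 ∈ {X | (IsUnit X ∧ BlockToeplitz N α m X) ∧
            ∃ D : ∀ r, Matrix (Fin (m r)) (Fin (m r)) ℂ, (∀ r, IsUnit (D r)) ∧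
              X = diagRep N α m D} ∧
          P.2 ∈ {X | (IsUnit X ∧ BlockToeplitz N α m X) ∧
            ∀ (r : Fin N) (i : Fin (α r)) (p q : Fin (m r)),
              X ⟨r, i, p⟩ ⟨r, i, q⟩ = if p = q then 1 else 0} ∧
          X = P.1 * P.2) := by
  classical
  refine ⟨?_, ?_, ?_, ?_, ?_, ?_, ?_, ?_, ?_, ?_⟩
  · exact fun X hX => hX.1
  · exact ⟨⟨isUnit_one, BT_one⟩, fun _ => 1, fun _ => isUnit_one, diagRep_one.symm⟩
  · rintro X Y ⟨⟨hXu, hXbt⟩, D, hD, rfl⟩ ⟨⟨hYu, hYbt⟩, E, hE, rfl⟩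
    exact ⟨⟨hXu.mul hYu, BT_mul hXbt hYbt⟩, fun r => D r * E r,
      fun r => (hD r).mul (hE r), diagRep_mul D E⟩
  · rintro X ⟨⟨hXu, hXbt⟩, D, hD, rfl⟩
    exact ⟨⟨isUnit_inv_mat hXu, BT_inv hXu hXbt⟩, fun r => (D r)⁻¹,
      fun r => isUnit_inv_mat (hD r), Matrix.inv_eq_right_inv (diagRep_mul_inv D hD)⟩
  · exact ⟨⟨isUnit_one, BT_one⟩, (mem_U_iff hα BT_one).mpr (fun r => piD_one hα r)⟩
  · rintro X Y ⟨⟨hXu, hXbt⟩, hXd⟩ ⟨⟨hYu, hYbt⟩, hYd⟩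
    refine ⟨⟨hXu.mul hYu, BT_mul hXbt hYbt⟩,
      (mem_U_iff hα (BT_mul hXbt hYbt)).mpr fun r => ?_⟩
    rw [piD_mul hα hmono hXbt hYbt r, (mem_U_iff hα hXbt).mp hXd r,
      (mem_U_iff hα hYbt).mp hYd r, one_mul]
  · rintro X ⟨⟨hXu, hXbt⟩, hXd⟩
    refine ⟨⟨isUnit_inv_mat hXu, BT_inv hXu hXbt⟩,
      (mem_U_iff hα (BT_inv hXu hXbt)).mpr fun r => ?_⟩
    have h1 : piD hα X r * piD hα X⁻¹ r = 1 := by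
      rw [← piD_mul hα hmono hXbt (BT_inv hXu hXbt) r, mul_inv_one hXu, piD_one]
    rwa [(mem_U_iff hα hXbt).mp hXd r, one_mul] at h1
  · rintro X U ⟨hXu, hXbt⟩ ⟨⟨hUu, hUbt⟩, hUd⟩
    have hXibt := BT_inv hXu hXbt
    have hXUbt := BT_mul hXbt hUbt
    refine ⟨⟨(hXu.mul hUu).mul (isUnit_inv_mat hXu), BT_mul hXUbt hXibt⟩,
      (mem_U_iff hα (BT_mul hXUbt hXibt)).mpr fun r => ?_⟩
    rw [piD_mul hα hmono hXUbt hXibt r, piD_mul hα hmono hXbt hUbt r,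
      (mem_U_iff hα hUbt).mp hUd r, mul_one, ← piD_mul hα hmono hXbt hXibt r,
      mul_inv_one hXu, piD_one]
  · ext X
    simp only [Set.mem_inter_iff, Set.mem_setOf_eq, Set.mem_singleton_iff]
    constructor
    · rintro ⟨⟨⟨hXu, hXbt⟩, D, hD, rfl⟩, ⟨-, hXd⟩⟩
      have h1 : ∀ r, D r = 1 := fun r => by
        rw [← piD_diagRep hα D r]
        exact (mem_U_iff hα (diagRep_BT D)).mp hXd r
      rw [show D = (fun _ : Fin N => (1 : Matrix _ _ ℂ)) from funext h1, diagRep_one]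
    · rintro rfl
      exact ⟨⟨⟨isUnit_one, BT_one⟩, fun _ => 1, fun _ => isUnit_one, diagRep_one.symm⟩,
        ⟨isUnit_one, BT_one⟩, (mem_U_iff hα BT_one).mpr (fun r => piD_one hα r)⟩
  · rintro X ⟨hXu, hXbt⟩
    have hXibt := BT_inv hXu hXbt
    set E : ∀ r, Matrix (Fin (m r)) (Fin (m r)) ℂ := fun r => piD hα X r with hE
    have hEu : ∀ r, IsUnit (E r) := by
      intro r
      have h1 : E r * piD hα X⁻¹ r = 1 := by
        rw [hE]
        simp only []
        rw [← piD_mul hα hmono hXbt hXibt r, mul_inv_one hXu, piD_one]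
      exact ⟨⟨E r, piD hα X⁻¹ r, h1, mul_eq_one_comm.mp h1⟩, rfl⟩
    set Dm := diagRep N α m E with hDm
    set Um := diagRep N α m (fun r => (E r)⁻¹) * X with hUm
    have hDu : IsUnit Dm := diagRep_isUnit E hEu
    have hDbt : BlockToeplitz N α m Dm := diagRep_BT E
    have hIbt : BlockToeplitz N α m (diagRep N α m fun r => (E r)⁻¹) := diagRep_BT _
    have hIu : IsUnit (diagRep N α m fun r => (E r)⁻¹) :=
      diagRep_isUnit _ (fun r => isUnit_inv_mat (hEu r))
    have hUu : IsUnit Um := hIu.mul hXu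
    have hUbt : BlockToeplitz N α m Um := BT_mul hIbt hXbt
    have hUd : ∀ r, piD hα Um r = 1 := fun r => by
      rw [hUm, piD_mul hα hmono hIbt hXbt r, piD_diagRep hα _ r,
        Matrix.nonsing_inv_mul _ ((Matrix.isUnit_iff_isUnit_det _).mp (hEu r))]
    have hfact : X = Dm * Um := by
      rw [hDm, hUm, ← mul_assoc, diagRep_mul_inv E hEu, one_mul]
    refine ⟨(Dm, Um), ⟨⟨⟨hDu, hDbt⟩, E, hEu, hDm⟩,
      ⟨⟨hUu, hUbt⟩, (mem_U_iff hα hUbt).mpr hUd⟩, hfact⟩, ?_⟩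
    rintro ⟨D₂, U₂⟩ ⟨⟨⟨hD2u, hD2bt⟩, E₂, hE2u, hD2eq⟩, ⟨⟨hU2u, hU2bt⟩, hU2d⟩, hfact₂⟩
    dsimp only at hD2u hD2bt hD2eq hfact₂ hU2d hU2u hU2bt
    have hE2 : ∀ r, E₂ r = E r := by
      intro r
      have h2 : piD hα X r = piD hα D₂ r * piD hα U₂ r := by
        rw [hfact₂]; exact piD_mul hα hmono hD2bt hU2bt r
      rw [hD2eq, piD_diagRep hα E₂ r, (mem_U_iff hα hU2bt).mp hU2d r, mul_one] at h2
      exact h2.symm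
    have hD2 : D₂ = Dm := by
      rw [hD2eq, hDm]; exact congrArg _ (funext hE2)
    have hU2 : U₂ = Um := by
      apply hD2u.mul_left_cancel
      rw [← hfact₂, hD2, ← hfact]
    rw [Prod.mk.injEq]
    exact ⟨hD2, hU2⟩

end
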